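/- Let R_m = ℂ[z_0,…,z_{m-1}], Z_0(u) = ∑_{i=0}^{m-1} z_i u^{i+1}, Z_1(u) = ∑_{i=1}^{m-1} z_i u^i, and J_m the ideal generated by the coefficients (Z_0(u)^r)_s for r ≥ 1, s ≥ m+1. For integers r ≥ t > 0 and 0 ≤ s ≤ r, the element z_0^{r-s} (Z_1(u)^{s+1})_{m-t}, taken modulo J_m, belongs to the ℂ-span modulo J_m of the elements z_0^{t-j} (Z_1(u)^{r-t+j+1})_{m-t} for 1 ≤ j ≤ t. -/

import Mathlib

open Polynomial

/-- `Z₀(u) = ∑_{i=0}^{m-1} z_i u^{i+1}` in `R_m[u]`, `R_m = ℂ[z_0,…,z_{m-1}]`. -/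
noncomputable def Zzero (m : ℕ) : Polynomial (MvPolynomial (Fin m) ℂ) :=
  ∑ i : Fin m, Polynomial.C (MvPolynomial.X i) * Polynomial.X ^ ((i : ℕ) + 1)

/-- `Z₁(u) = ∑_{i=1}^{m-1} z_i u^i`. -/
noncomputable def Zone (m : ℕ) : Polynomial (MvPolynomial (Fin m) ℂ) :=
  ∑ i ∈ Finset.univ.filter (fun i : Fin m => 1 ≤ (i : ℕ)),
    Polynomial.C (MvPolynomial.X i) * Polynomial.X ^ (i : ℕ)

/-- The ideal `J_m` generated by the coefficients `(Z₀(u)^r)_s` for `r ≥ 1`, `s ≥ m+1`. -/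
noncomputable def Jm (m : ℕ) : Ideal (MvPolynomial (Fin m) ℂ) :=
  Ideal.span {x | ∃ r s : ℕ, 1 ≤ r ∧ m + 1 ≤ s ∧ x = ((Zzero m) ^ r).coeff s}


/-- coefficients of `(1+x)^{-(t+1)}`: `G t i = (-1)^i C(t+i, i)`. -/
noncomputable def Gc (t i : ℕ) : ℂ := (-1)^i * (Nat.choose (t+i) i : ℂ)

noncomputable def Bp (t M : ℕ) : Polynomial ℂ :=
  ∑ i ∈ Finset.range M, Polynomial.C (Gc t i) * Polynomial.X ^ i

lemma coeff_Bp (t M a : ℕ) : (Bp t M).coeff a = if a < M then Gc t a else 0 := by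
  rw [Bp, finset_sum_coeff]
  simp only [coeff_C_mul, coeff_X_pow, mul_ite, mul_one, mul_zero]
  rw [Finset.sum_ite_eq (Finset.range M) a (fun i => Gc t i)]
  simp [Finset.mem_range]

lemma coeff_one_sub_pow (N a : ℕ) :
    (PowerSeries.coeff (R := ℂ) a) ((1 - PowerSeries.X)^N) = (-1)^a * (N.choose a : ℂ) := by
  have h : ((1:PowerSeries ℂ) - PowerSeries.X)^N
      = ∑ j ∈ Finset.range (N+1), PowerSeries.C (R := ℂ) ((-1)^j * (N.choose j : ℂ)) * PowerSeries.X ^ j := by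
    rw [sub_eq_add_neg, add_comm, add_pow]
    refine Finset.sum_congr rfl fun j hj => ?_
    have : ((N.choose j : ℕ) : PowerSeries ℂ) = PowerSeries.C (R := ℂ) ((N.choose j : ℂ)) := by
      simp [map_natCast]
    rw [this, neg_pow, one_pow, mul_one]
    ring_nf
    simp [map_mul, map_pow, map_neg, map_one]
    ring
  rw [h, map_sum]
  have h2 : ∀ j ∈ Finset.range (N+1),
      (PowerSeries.coeff (R := ℂ) a) (PowerSeries.C (R := ℂ) ((-1)^j * (N.choose j : ℂ)) * PowerSeries.X ^ j)
      = if j = a then (-1)^j * (N.choose j : ℂ) else 0 := by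
    intro j hj
    rw [PowerSeries.coeff_C_mul, PowerSeries.coeff_X_pow]
    simp [eq_comm]
  rw [Finset.sum_congr rfl h2, Finset.sum_ite_eq' (Finset.range (N+1)) a]
  by_cases ha : a < N + 1
  · simp [Finset.mem_range, ha]
  · simp only [Finset.mem_range, ha, if_false]
    rw [Nat.choose_eq_zero_of_lt (by omega)]
    simp

lemma H1 (t k : ℕ) :
    ∑ i ∈ Finset.range (k+1), ((-1)^i * (Nat.choose (t+1) i : ℂ)) * (Nat.choose (t+(k-i)) t : ℂ)
      = if k = 0 then 1 else 0 := by
  have key : ((1 - PowerSeries.X : PowerSeries ℂ)^(t+1)) *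
      (PowerSeries.mk fun n => (Nat.choose (t+n) t : ℂ)) = 1 := by
    have h1 := (PowerSeries.invOneSubPow ℂ (t+1)).inv_val
    rwa [PowerSeries.invOneSubPow_inv_eq_one_sub_pow,
      PowerSeries.invOneSubPow_val_succ_eq_mk_add_choose] at h1
  have := congrArg (PowerSeries.coeff (R := ℂ) k) key
  rw [PowerSeries.coeff_mul, PowerSeries.coeff_one] at this
  rw [Finset.Nat.sum_antidiagonal_eq_sum_range_succ_mk] at this
  simpa [coeff_one_sub_pow, PowerSeries.coeff_mk] using this

lemma HL (t k : ℕ) :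
    ∑ i ∈ Finset.range (k+1), (Nat.choose (t+1) i : ℂ) * Gc t (k-i) = if k = 0 then 1 else 0 := by
  have h := H1 t k
  have e : ∀ i ∈ Finset.range (k+1),
      (Nat.choose (t+1) i : ℂ) * Gc t (k-i)
        = (-1)^k * (((-1)^i * (Nat.choose (t+1) i : ℂ)) * (Nat.choose (t+(k-i)) t : ℂ)) := by
    intro i hi
    rw [Finset.mem_range] at hi
    have hik : i ≤ k := by omega
    have hsym : (Nat.choose (t+(k-i)) (k-i)) = (Nat.choose (t+(k-i)) t) := by
      have := Nat.choose_symm (n := t+(k-i)) (k := t) (by omega)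
      simpa [Nat.add_sub_cancel_left] using this
    rw [Gc, hsym]
    have hsign : ((-1:ℂ))^(k-i) = (-1)^k * (-1)^i := by
      have h1 : ((-1:ℂ))^k = (-1)^(k-i) * (-1)^i := by
        rw [← pow_add]; congr 1; omega
      have h2 : ((-1:ℂ))^i * (-1)^i = 1 := by
        rw [← pow_add, ← two_mul, pow_mul]; norm_num
      calc ((-1:ℂ))^(k-i) = (-1)^(k-i) * ((-1)^i * (-1)^i) := by rw [h2, mul_one]
        _ = ((-1)^(k-i) * (-1)^i) * (-1)^i := by ring
        _ = (-1)^k * (-1)^i := by rw [← h1]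
    rw [hsign]; ring
  rw [Finset.sum_congr rfl e, ← Finset.mul_sum, h]
  by_cases hk : k = 0 <;> simp [hk]

lemma Lmain (t M k : ℕ) (hk : k ≤ M) :
    (((1:Polynomial ℂ) + X)^(t+1) * Bp t M).coeff k
      = (if k = 0 then 1 else 0) - (if k = M then Gc t M else 0) := by
  rw [Polynomial.coeff_mul, Finset.Nat.sum_antidiagonal_eq_sum_range_succ_mk]
  simp only [coeff_one_add_X_pow, coeff_Bp]
  rcases lt_or_eq_of_le hk with h | h
  · have e : ∀ i ∈ Finset.range (k+1),
        (Nat.choose (t+1) i : ℂ) * (if k - i < M then Gc t (k-i) else 0)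
          = (Nat.choose (t+1) i : ℂ) * Gc t (k-i) := by
      intro i hi
      rw [if_pos (by omega)]
    rw [Finset.sum_congr rfl e, HL, if_neg (show ¬ (k = M) by omega)]
    ring
  · subst h
    have e : ∀ i ∈ Finset.range (k+1),
        (Nat.choose (t+1) i : ℂ) * (if k - i < k then Gc t (k-i) else 0)
          = (Nat.choose (t+1) i : ℂ) * Gc t (k-i) - (if i = 0 then Gc t k else 0) := by
      intro i hi
      rcases Nat.eq_zero_or_pos i with hi0 | hi0
      · subst hi0
        simp
      · rw [if_pos (by rw [Finset.mem_range] at hi; omega), if_neg (by omega)]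
        ring
    rw [Finset.sum_congr rfl e, Finset.sum_sub_distrib, HL,
      Finset.sum_ite_eq' (Finset.range (k+1)) 0 (fun _ => Gc t k)]
    simp

noncomputable def qp (t n K : ℕ) : Polynomial ℂ :=
  (-(Gc t (n-K))) • Bp t n + (Gc t n) • (X^K * Bp t (n-K))

lemma coeff_f (t n K k : ℕ) (hk1 : 1 ≤ k) (hkn : k ≤ n) (hK1 : 1 ≤ K) (hKn : K ≤ n) :
    (((1:Polynomial ℂ) + X)^(t+1) * qp t n K).coeff k = if k = K then Gc t n else 0 := by
  have hsplit : ((1:Polynomial ℂ) + X)^(t+1) * qp t n K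
      = (-(Gc t (n-K))) • (((1:Polynomial ℂ) + X)^(t+1) * Bp t n)
        + (Gc t n) • ((((1:Polynomial ℂ) + X)^(t+1) * Bp t (n-K)) * X^K) := by
    simp only [qp, Polynomial.smul_eq_C_mul]; ring
  rw [hsplit, Polynomial.coeff_add, Polynomial.coeff_smul, Polynomial.coeff_smul,
    Polynomial.coeff_mul_X_pow', Lmain t n k hkn]
  by_cases hKk : K ≤ k
  · rw [if_pos hKk, Lmain t (n-K) (k-K) (by omega)]
    by_cases hkK : k = K
    · have h1 : ¬ (k = 0) := by omega
      have h2 : k - K = 0 := by omega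
      by_cases hkn' : k = n
      · have h3 : k - K = n - K := by omega
        rw [if_pos hkK, if_neg h1, if_pos hkn', if_pos h2, if_pos h3]
        have h4 : n - K = 0 := by omega
        rw [h4]
        simp [Gc, smul_eq_mul]
      · have h3 : ¬ (k - K = n - K) := by omega
        rw [if_pos hkK, if_neg h1, if_neg hkn', if_pos h2, if_neg h3]
        simp
    · have h1 : ¬ (k = 0) := by omega
      have h2 : ¬ (k - K = 0) := by omega
      by_cases hkn' : k = n
      · have h3 : k - K = n - K := by omega
        rw [if_neg hkK, if_neg h1, if_pos hkn', if_neg h2, if_pos h3]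
        simp only [smul_eq_mul]; ring
      · have h3 : ¬ (k - K = n - K) := by omega
        rw [if_neg hkK, if_neg h1, if_neg hkn', if_neg h2, if_neg h3]
        simp
  · rw [if_neg hKk, if_neg (show ¬ (k = 0) by omega), if_neg (show ¬ (k = K) by omega),
      if_neg (show ¬ (k = n) by omega)]
    simp

lemma coeff_qp_eq_zero (t n K a : ℕ) (ha : n ≤ a) : (qp t n K).coeff a = 0 := by
  rw [qp, Polynomial.coeff_add, Polynomial.coeff_smul, Polynomial.coeff_smul,
    show (X:Polynomial ℂ)^K * Bp t (n-K) = Bp t (n-K) * X^K from mul_comm _ _,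
    Polynomial.coeff_mul_X_pow', coeff_Bp, coeff_Bp]
  rw [if_neg (by omega)]
  by_cases h : K ≤ a
  · rw [if_pos h, if_neg (by omega)]; simp
  · rw [if_neg h]; simp

lemma natDegree_qp_lt (t n K : ℕ) (hn : 1 ≤ n) : ((qp t n K).comp (X - 1)).natDegree < n := by
  have h1 : (qp t n K).natDegree ≤ n - 1 :=
    Polynomial.natDegree_le_iff_coeff_eq_zero.2 fun m hm => coeff_qp_eq_zero t n K m (by omega)
  have h2 := Polynomial.natDegree_comp_le (p := qp t n K) (q := X - 1)
  have h3 : (X - 1 : Polynomial ℂ).natDegree ≤ 1 := by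
    rw [show (X - 1 : Polynomial ℂ) = X - Polynomial.C 1 by simp]
    exact (Polynomial.natDegree_X_sub_C 1).le
  calc ((qp t n K).comp (X - 1)).natDegree ≤ (qp t n K).natDegree * (X - 1 : Polynomial ℂ).natDegree := h2
    _ ≤ (n-1) * 1 := Nat.mul_le_mul h1 h3
    _ < n := by omega

lemma Fsum (t n K k : ℕ) (hn : 1 ≤ n) :
    ∑ j ∈ Finset.range n, (((qp t n K).comp (X - 1)).coeff j) * (((t+1+j).choose k : ℕ) : ℂ)
      = (((1:Polynomial ℂ) + X)^(t+1) * qp t n K).coeff k := by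
  set D := (qp t n K).comp (X - 1) with hD
  have hdeg : D.natDegree < n := natDegree_qp_lt t n K hn
  have hcomp : D.comp (X + 1) = qp t n K := by
    rw [hD, Polynomial.comp_assoc]
    simp
  have hexp : ((1:Polynomial ℂ) + X)^(t+1) * qp t n K
      = ∑ j ∈ Finset.range n, Polynomial.C (D.coeff j) * ((1:Polynomial ℂ)+X)^(t+1+j) := by
    conv_lhs => rw [← hcomp, Polynomial.as_sum_range' D n hdeg]
    rw [Polynomial.comp, Polynomial.eval₂_finset_sum, Finset.mul_sum]
    refine Finset.sum_congr rfl fun j hj => ?_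
    rw [Polynomial.eval₂_monomial, pow_add]
    rw [show (X + 1 : Polynomial ℂ) = 1 + X from add_comm _ _]
    ring
  rw [hexp, Polynomial.finset_sum_coeff]
  refine Finset.sum_congr rfl fun j hj => ?_
  rw [Polynomial.coeff_C_mul, Polynomial.coeff_one_add_X_pow]

lemma Gc_ne_zero (t n : ℕ) : Gc t n ≠ 0 := by
  rw [Gc]
  apply mul_ne_zero
  · exact pow_ne_zero _ (by norm_num)
  · exact_mod_cast Nat.cast_ne_zero.2 (Nat.choose_pos (by omega)).ne'

noncomputable def Pm (m : ℕ) : Polynomial (MvPolynomial (Fin m) ℂ) :=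
  ∑ i : Fin m, Polynomial.C (MvPolynomial.X i) * Polynomial.X ^ (i : ℕ)

lemma Zzero_eq_X_mul (m : ℕ) : Zzero m = Polynomial.X * Pm m := by
  rw [Zzero, Pm, Finset.mul_sum]
  refine Finset.sum_congr rfl fun i _ => ?_
  rw [pow_succ]; ring

lemma Pm_eq (m : ℕ) (hm : 0 < m) :
    Pm m = Zone m + Polynomial.C (MvPolynomial.X (⟨0, hm⟩ : Fin m)) := by
  rw [Pm, Zone]
  rw [← Finset.sum_filter_add_sum_filter_not Finset.univ (fun i : Fin m => 1 ≤ (i : ℕ))]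
  congr 1
  have h : Finset.univ.filter (fun i : Fin m => ¬ 1 ≤ (i : ℕ)) = {(⟨0, hm⟩ : Fin m)} := by
    ext i
    simp [Fin.ext_iff]
  rw [h, Finset.sum_singleton]
  simp

lemma Pm_coeff_mem (m t R : ℕ) (htm : t ≤ m) (hR : t + 1 ≤ R) :
    ((Pm m) ^ R).coeff (m - t) ∈ Jm m := by
  apply Ideal.subset_span
  refine ⟨R, (m - t) + R, by omega, by omega, ?_⟩
  rw [Zzero_eq_X_mul, mul_pow, Polynomial.coeff_X_pow_mul]

lemma Pm_pow_coeff (m : ℕ) (hm : 0 < m) (R d : ℕ) :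
    ((Pm m) ^ R).coeff d = ∑ k ∈ Finset.range (R + 1),
      ((Zone m) ^ k).coeff d * (MvPolynomial.X (⟨0, hm⟩ : Fin m)) ^ (R - k)
        * ((R.choose k : ℕ) : MvPolynomial (Fin m) ℂ) := by
  rw [Pm_eq m hm, add_pow, Polynomial.finset_sum_coeff]
  refine Finset.sum_congr rfl fun k hk => ?_
  have hc : (((R.choose k : ℕ)) : Polynomial (MvPolynomial (Fin m) ℂ))
      = Polynomial.C ((R.choose k : ℕ) : MvPolynomial (Fin m) ℂ) := by
    simp
  rw [hc, ← Polynomial.C_pow]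
  rw [Polynomial.coeff_mul_C]
  rw [Polynomial.coeff_mul_C]

lemma ring_identity (m : ℕ) (hm : 0 < m) (t n j : ℕ) (hj : j < n) :
    ∑ k ∈ Finset.range (n + t + 1), (((t+1+j).choose k : ℕ) : MvPolynomial (Fin m) ℂ)
        * ((MvPolynomial.X (⟨0, hm⟩ : Fin m)) ^ (n + t - k) * ((Zone m) ^ k).coeff (m - t))
      = (MvPolynomial.X (⟨0, hm⟩ : Fin m)) ^ (n - 1 - j) * ((Pm m) ^ (t+1+j)).coeff (m - t) := by
  rw [Pm_pow_coeff m hm (t+1+j) (m-t), Finset.mul_sum]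
  have hsub : Finset.range (t+1+j+1) ⊆ Finset.range (n+t+1) := by
    intro x hx
    simp only [Finset.mem_range] at *
    omega
  have hvan : ∀ k ∈ Finset.range (n+t+1), k ∉ Finset.range (t+1+j+1) →
      (((t+1+j).choose k : ℕ) : MvPolynomial (Fin m) ℂ)
        * ((MvPolynomial.X (⟨0, hm⟩ : Fin m)) ^ (n + t - k) * ((Zone m) ^ k).coeff (m - t)) = 0 := by
    intro k _ hk
    simp only [Finset.mem_range] at hk
    rw [Nat.choose_eq_zero_of_lt (by omega)]
    simp
  calc ∑ k ∈ Finset.range (n + t + 1), (((t+1+j).choose k : ℕ) : MvPolynomial (Fin m) ℂ)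
        * ((MvPolynomial.X (⟨0, hm⟩ : Fin m)) ^ (n + t - k) * ((Zone m) ^ k).coeff (m - t))
      = ∑ k ∈ Finset.range (t+1+j+1), (((t+1+j).choose k : ℕ) : MvPolynomial (Fin m) ℂ)
        * ((MvPolynomial.X (⟨0, hm⟩ : Fin m)) ^ (n + t - k) * ((Zone m) ^ k).coeff (m - t)) :=
        (Finset.sum_subset hsub hvan).symm
    _ = ∑ k ∈ Finset.range (t+1+j+1), (MvPolynomial.X (⟨0, hm⟩ : Fin m)) ^ (n - 1 - j) *
          (((Zone m) ^ k).coeff (m - t) * (MvPolynomial.X (⟨0, hm⟩ : Fin m)) ^ (t+1+j-k)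
            * (((t+1+j).choose k : ℕ) : MvPolynomial (Fin m) ℂ)) := by
        refine Finset.sum_congr rfl fun k hk => ?_
        simp only [Finset.mem_range] at hk
        rw [show n + t - k = (n-1-j) + (t+1+j-k) from by omega, pow_add]
        ring

lemma rel_j (m : ℕ) (hm : 0 < m) (t n j : ℕ) (htm : t < m) (hj : j < n) :
    Ideal.Quotient.mk (Jm m) (∑ k ∈ Finset.range (n + t + 1),
        (((t+1+j).choose k : ℕ) : MvPolynomial (Fin m) ℂ)
          * ((MvPolynomial.X (⟨0, hm⟩ : Fin m)) ^ (n + t - k) * ((Zone m) ^ k).coeff (m - t)))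
      = 0 := by
  rw [ring_identity m hm t n j hj]
  exact Ideal.Quotient.eq_zero_iff_mem.2
    (Ideal.mul_mem_left _ _ (Pm_coeff_mem m t (t+1+j) (by omega) (by omega)))

lemma claimA (m : ℕ) (hm : 0 < m) (t n : ℕ) (htm : t < m) (hn : 1 ≤ n) (c : ℕ → ℂ) :
    ∑ k ∈ Finset.range (n + t + 1),
        (∑ j ∈ Finset.range n, c j * (((t+1+j).choose k : ℕ) : ℂ)) •
          (Ideal.Quotient.mk (Jm m)
            ((MvPolynomial.X (⟨0, hm⟩ : Fin m)) ^ (n + t - k) * ((Zone m) ^ k).coeff (m - t)))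
      = 0 := by
  have hsmul : ∀ (q : ℕ) (x : MvPolynomial (Fin m) ℂ),
      ((q : ℂ)) • Ideal.Quotient.mk (Jm m) x
        = Ideal.Quotient.mk (Jm m) ((q : MvPolynomial (Fin m) ℂ) * x) := by
    intro q x
    rw [Nat.cast_smul_eq_nsmul, ← map_nsmul, nsmul_eq_mul]
  calc ∑ k ∈ Finset.range (n + t + 1),
        (∑ j ∈ Finset.range n, c j * (((t+1+j).choose k : ℕ) : ℂ)) •
          (Ideal.Quotient.mk (Jm m)
            ((MvPolynomial.X (⟨0, hm⟩ : Fin m)) ^ (n + t - k) * ((Zone m) ^ k).coeff (m - t)))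
      = ∑ k ∈ Finset.range (n + t + 1), ∑ j ∈ Finset.range n,
          (c j * (((t+1+j).choose k : ℕ) : ℂ)) •
          (Ideal.Quotient.mk (Jm m)
            ((MvPolynomial.X (⟨0, hm⟩ : Fin m)) ^ (n + t - k) * ((Zone m) ^ k).coeff (m - t))) := by
        refine Finset.sum_congr rfl fun k _ => ?_
        rw [Finset.sum_smul]
    _ = ∑ j ∈ Finset.range n, ∑ k ∈ Finset.range (n + t + 1),
          (c j * (((t+1+j).choose k : ℕ) : ℂ)) •
          (Ideal.Quotient.mk (Jm m)
            ((MvPolynomial.X (⟨0, hm⟩ : Fin m)) ^ (n + t - k) * ((Zone m) ^ k).coeff (m - t))) :=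
        Finset.sum_comm
    _ = ∑ j ∈ Finset.range n, c j •
          (Ideal.Quotient.mk (Jm m) (∑ k ∈ Finset.range (n + t + 1),
            (((t+1+j).choose k : ℕ) : MvPolynomial (Fin m) ℂ)
              * ((MvPolynomial.X (⟨0, hm⟩ : Fin m)) ^ (n + t - k) * ((Zone m) ^ k).coeff (m - t)))) := by
        refine Finset.sum_congr rfl fun j _ => ?_
        rw [map_sum, Finset.smul_sum]
        refine Finset.sum_congr rfl fun k _ => ?_
        rw [mul_smul, hsmul]
    _ = 0 := by
        refine Finset.sum_eq_zero fun j hj => ?_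
        rw [Finset.mem_range] at hj
        rw [rel_j m hm t n j htm hj, smul_zero]

/-- For `r ≥ t > 0` and `0 ≤ s ≤ r`, the image of
`z₀^{r-s} (Z₁(u)^{s+1})_{m-t}` in `R_m/J_m` lies in the ℂ-span of the images of
the elements `z₀^{t-j} (Z₁(u)^{r-t+j+1})_{m-t}` for `1 ≤ j ≤ t`. -/
theorem stmt_15 (m : ℕ) (hm : 0 < m) (r t s : ℕ) (ht : 0 < t) (htr : t ≤ r) (hsr : s ≤ r) :
    Ideal.Quotient.mk (Jm m)
        (MvPolynomial.X (⟨0, hm⟩ : Fin m) ^ (r - s) * ((Zone m) ^ (s + 1)).coeff (m - t)) ∈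
      Submodule.span ℂ
        {x : MvPolynomial (Fin m) ℂ ⧸ Jm m |
          ∃ j : ℕ, 1 ≤ j ∧ j ≤ t ∧
            x = Ideal.Quotient.mk (Jm m)
              (MvPolynomial.X (⟨0, hm⟩ : Fin m) ^ (t - j) *
                ((Zone m) ^ (r - t + j + 1)).coeff (m - t))} :=  by
  classical
  by_cases h1 : r - t < s
  · -- the element is itself one of the generators (j = t - (r - s))
    apply Submodule.subset_span
    refine ⟨t - (r - s), by omega, by omega, ?_⟩
    have e1 : t - (t - (r - s)) = r - s := by omega
    have e2 : r - t + (t - (r - s)) + 1 = s + 1 := by omega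
    rw [e1, e2]
  · by_cases h2 : m ≤ t
    · -- degenerate case: the coefficient is zero
      have hmt : m - t = 0 := by omega
      rw [hmt]
      have hc0 : (Zone m).coeff 0 = 0 := by
        rw [Zone, Polynomial.finset_sum_coeff]
        refine Finset.sum_eq_zero fun i hi => ?_
        rw [Finset.mem_filter] at hi
        rw [Polynomial.coeff_C_mul, Polynomial.coeff_X_pow, if_neg (by omega)]
        simp
      have hz : ((Zone m) ^ (s+1)).coeff 0 = 0 := by
        rw [← Polynomial.constantCoeff_apply, map_pow, Polynomial.constantCoeff_apply, hc0,
          zero_pow (by omega)]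
      rw [hz, mul_zero, map_zero]
      exact Submodule.zero_mem _
    · -- main case : t < m and s ≤ r - t
      have htm : t < m := by omega
      set n : ℕ := r - t + 1 with hn
      set K : ℕ := s + 1 with hK
      have hn1 : 1 ≤ n := by omega
      have hK1 : 1 ≤ K := by omega
      have hKn : K ≤ n := by omega
      set c : ℕ → ℂ := fun j => ((qp t n K).comp (Polynomial.X - 1)).coeff j with hc
      have A := claimA m hm t n htm hn1 c
      have hF : ∀ k, 1 ≤ k → k ≤ n →
          (∑ j ∈ Finset.range n, c j * (((t+1+j).choose k : ℕ) : ℂ))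
            = if k = K then Gc t n else 0 := by
        intro k hk1 hk2
        rw [hc]
        rw [Fsum t n K k hn1, coeff_f t n K k hk1 hk2 hK1 hKn]
      -- split off the k = 0 term
      have hsplit : Finset.range (n + t + 1) = insert 0 (Finset.Icc 1 (n + t)) := by
        ext x
        simp only [Finset.mem_range, Finset.mem_insert, Finset.mem_Icc]
        omega
      rw [hsplit, Finset.sum_insert (by simp)] at A
      have hzero0 : ((Zone m) ^ 0).coeff (m - t) = 0 := by
        rw [pow_zero, Polynomial.coeff_one, if_neg (by omega)]
      rw [hzero0, mul_zero, map_zero, smul_zero, zero_add] at A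
      have hunion : Finset.Icc 1 (n + t) = Finset.Icc 1 n ∪ Finset.Icc (n+1) (n+t) := by
        ext x
        simp only [Finset.mem_Icc, Finset.mem_union]
        omega
      have hdisj : Disjoint (Finset.Icc 1 n) (Finset.Icc (n+1) (n+t)) := by
        rw [Finset.disjoint_left]
        intro a ha hb
        simp only [Finset.mem_Icc] at ha hb
        omega
      rw [hunion, Finset.sum_union hdisj] at A
      have hKmem : K ∈ Finset.Icc 1 n := by
        simp only [Finset.mem_Icc]
        omega
      have hfirst : ∑ k ∈ Finset.Icc 1 n,
          (∑ j ∈ Finset.range n, c j * (((t+1+j).choose k : ℕ) : ℂ)) •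
            (Ideal.Quotient.mk (Jm m)
              ((MvPolynomial.X (⟨0, hm⟩ : Fin m)) ^ (n + t - k) * ((Zone m) ^ k).coeff (m - t)))
          = Gc t n • (Ideal.Quotient.mk (Jm m)
              ((MvPolynomial.X (⟨0, hm⟩ : Fin m)) ^ (n + t - K) * ((Zone m) ^ K).coeff (m - t))) := by
        rw [Finset.sum_eq_single_of_mem K hKmem]
        · rw [hF K hK1 hKn, if_pos rfl]
        · intro k hk hne
          simp only [Finset.mem_Icc] at hk
          rw [hF k hk.1 hk.2, if_neg hne, zero_smul]
      rw [hfirst] at A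
      have heK : Ideal.Quotient.mk (Jm m)
            ((MvPolynomial.X (⟨0, hm⟩ : Fin m)) ^ (n + t - K) * ((Zone m) ^ K).coeff (m - t))
          = ∑ k ∈ Finset.Icc (n+1) (n+t), (-(Gc t n)⁻¹ *
              (∑ j ∈ Finset.range n, c j * (((t+1+j).choose k : ℕ) : ℂ))) •
            (Ideal.Quotient.mk (Jm m)
              ((MvPolynomial.X (⟨0, hm⟩ : Fin m)) ^ (n + t - k) * ((Zone m) ^ k).coeff (m - t))) := by
        have hGne := Gc_ne_zero t n
        have h3 : Gc t n • (Ideal.Quotient.mk (Jm m)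
              ((MvPolynomial.X (⟨0, hm⟩ : Fin m)) ^ (n + t - K) * ((Zone m) ^ K).coeff (m - t)))
            = - ∑ k ∈ Finset.Icc (n+1) (n+t),
              (∑ j ∈ Finset.range n, c j * (((t+1+j).choose k : ℕ) : ℂ)) •
              (Ideal.Quotient.mk (Jm m)
                ((MvPolynomial.X (⟨0, hm⟩ : Fin m)) ^ (n + t - k) * ((Zone m) ^ k).coeff (m - t))) :=
          eq_neg_of_add_eq_zero_left A
        calc Ideal.Quotient.mk (Jm m)
              ((MvPolynomial.X (⟨0, hm⟩ : Fin m)) ^ (n + t - K) * ((Zone m) ^ K).coeff (m - t))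
            = (Gc t n)⁻¹ • (Gc t n • (Ideal.Quotient.mk (Jm m)
              ((MvPolynomial.X (⟨0, hm⟩ : Fin m)) ^ (n + t - K) * ((Zone m) ^ K).coeff (m - t)))) := by
              rw [smul_smul, inv_mul_cancel₀ hGne, one_smul]
          _ = (Gc t n)⁻¹ • (- ∑ k ∈ Finset.Icc (n+1) (n+t),
              (∑ j ∈ Finset.range n, c j * (((t+1+j).choose k : ℕ) : ℂ)) •
              (Ideal.Quotient.mk (Jm m)
                ((MvPolynomial.X (⟨0, hm⟩ : Fin m)) ^ (n + t - k) * ((Zone m) ^ k).coeff (m - t)))) := by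
              rw [h3]
          _ = ∑ k ∈ Finset.Icc (n+1) (n+t), (-(Gc t n)⁻¹ *
              (∑ j ∈ Finset.range n, c j * (((t+1+j).choose k : ℕ) : ℂ))) •
              (Ideal.Quotient.mk (Jm m)
                ((MvPolynomial.X (⟨0, hm⟩ : Fin m)) ^ (n + t - k) * ((Zone m) ^ k).coeff (m - t))) := by
              rw [smul_neg, Finset.smul_sum, ← Finset.sum_neg_distrib]
              refine Finset.sum_congr rfl fun k _ => ?_
              rw [smul_smul, ← neg_smul]
              congr 1
              ring
      have hgoal : (MvPolynomial.X (⟨0, hm⟩ : Fin m)) ^ (r - s) * ((Zone m) ^ (s+1)).coeff (m - t)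
          = (MvPolynomial.X (⟨0, hm⟩ : Fin m)) ^ (n + t - K) * ((Zone m) ^ K).coeff (m - t) := by
        have e3 : n + t - K = r - s := by omega
        rw [e3, hK]
      rw [hgoal, heK]
      refine Submodule.sum_mem _ fun k hk => ?_
      simp only [Finset.mem_Icc] at hk
      refine Submodule.smul_mem _ _ (Submodule.subset_span ?_)
      refine ⟨k - n, by omega, by omega, ?_⟩
      have e4 : t - (k - n) = n + t - k := by omega
      have e5 : r - t + (k - n) + 1 = k := by omega
      rw [e4, e5]
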